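/- Let G be a closed germ containing the principal stem 𝒮 = cc(Δ_e ∪ B_i), and let C = G ∪ (G* ∩ B_m), where B_m is the mid-ball. Then C is a closed germ, and for every germ C' containing C one has C' ∩ S_o = G ∩ S_o. -/

import Mathlib

noncomputable section

/- Ambient space: ℝ^(d²) with the standard inner product. -/
abbrev V (d : ℕ) := EuclideanSpace ℝ (Fin (d^2))

/-- The standard inner product ⟨u, v⟩ = ∑ i, u i * v i. -/
def ip {d : ℕ} (u v : V d) : ℝ := inner ℝ u v

/-- The barycenter c, with all entries equal to 1/d². -/
def cpt (d : ℕ) : V d := WithLp.toLp 2 (fun _ => 1/(d^2:ℝ))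

/-- The hyperplane H = {u : ⟨u, c⟩ = 1/d²} of vectors whose entries sum to 1. -/
def Hs (d : ℕ) : Set (V d) := {u | ip u (cpt d) = 1/(d^2:ℝ)}

/-- The polar A* = {u ∈ H : ⟨u, v⟩ ≥ 1/(d(d+1)) for all v ∈ A}. -/
def polar (d : ℕ) (A : Set (V d)) : Set (V d) :=
  {u | u ∈ Hs d ∧ ∀ v ∈ A, 1/((d:ℝ)*((d:ℝ)+1)) ≤ ip u v}

/-- cc(A): the closed convex hull of A. -/
def cc (d : ℕ) (A : Set (V d)) : Set (V d) := closure (convexHull ℝ A)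

/-- The probability simplex Δ = {u ∈ H : u i ≥ 0 for all i}. -/
def probSimplex (d : ℕ) : Set (V d) := {u | u ∈ Hs d ∧ ∀ i, 0 ≤ u i}

/-- The basis distributions e_k, with e_k(i) = (δ_{ki} + 1/d)/(d+1). -/
def basisDist (d : ℕ) (k : Fin (d^2)) : V d :=
  WithLp.toLp 2 (fun i => ((if k = i then (1:ℝ) else 0) + 1/(d:ℝ)) / ((d:ℝ)+1))

/-- The basis simplex Δ_e: the convex hull of the basis distributions. -/
def basisSimplex (d : ℕ) : Set (V d) := convexHull ℝ (Set.range (basisDist d))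

/-- The out-ball B_o = {u ∈ H : ⟨u, u⟩ ≤ 2/(d(d+1))}. -/
def outBall (d : ℕ) : Set (V d) := {u | u ∈ Hs d ∧ ip u u ≤ 2/((d:ℝ)*((d:ℝ)+1))}

/-- The out-sphere S_o = {u ∈ H : ⟨u, u⟩ = 2/(d(d+1))}. -/
def outSphere (d : ℕ) : Set (V d) := {u | u ∈ Hs d ∧ ip u u = 2/((d:ℝ)*((d:ℝ)+1))}

/-- The in-ball B_i = {u ∈ H : ‖u − c‖² ≤ 1/(d²(d²−1))}. -/
def inBall (d : ℕ) : Set (V d) :=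
  {u | u ∈ Hs d ∧ ‖u - cpt d‖^2 ≤ 1/((d:ℝ)^2*((d:ℝ)^2-1))}

/-- The in-sphere S_i = {u ∈ H : ‖u − c‖² = 1/(d²(d²−1))}. -/
def inSphere (d : ℕ) : Set (V d) :=
  {u | u ∈ Hs d ∧ ‖u - cpt d‖^2 = 1/((d:ℝ)^2*((d:ℝ)^2-1))}

/-- The mid-ball B_m = {u ∈ H : ‖u − c‖² ≤ 1/(d²(d+1))}. -/
def midBall (d : ℕ) : Set (V d) :=
  {u | u ∈ Hs d ∧ ‖u - cpt d‖^2 ≤ 1/((d:ℝ)^2*((d:ℝ)+1))}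

/-- A germ: a subset of Δ whose pairwise inner products satisfy the
fundamental inequalities 1/(d(d+1)) ≤ ⟨p, s⟩ ≤ 2/(d(d+1)). -/
def IsGerm (d : ℕ) (G : Set (V d)) : Prop :=
  G ⊆ probSimplex d ∧
  ∀ p ∈ G, ∀ s ∈ G, 1/((d:ℝ)*((d:ℝ)+1)) ≤ ip p s ∧ ip p s ≤ 2/((d:ℝ)*((d:ℝ)+1))

/-- A qplex: a self-polar subset of Δ ∩ B_o. -/
def IsQplex (d : ℕ) (Q : Set (V d)) : Prop :=
  Q ⊆ probSimplex d ∩ outBall d ∧ Q = polar d Q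

/-- Action of a d²×d² matrix on a vector: (R u)(i) = ∑ j, R i j * u j. -/
def mvec (d : ℕ) (R : Matrix (Fin (d^2)) (Fin (d^2)) ℝ) (u : V d) : V d :=
  WithLp.toLp 2 (fun i => ∑ j, R i j * u j)


lemma ip_eq_sum {d : ℕ} (u v : V d) : ip u v = ∑ i, u i * v i := by
  simp [ip, PiLp.inner_apply, RCLike.inner_apply, mul_comm]

lemma ip_comm {d : ℕ} (u v : V d) : ip u v = ip v u := by simp only [ip]; exact real_inner_comm v u

lemma ip_cc (d : ℕ) (hd : 2 ≤ d) : ip (cpt d) (cpt d) = 1/(d^2:ℝ) := by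
  have hd0 : (d:ℝ) ≠ 0 := by
    have : (2:ℝ) ≤ (d:ℝ) := by exact_mod_cast hd
    linarith
  rw [ip_eq_sum]
  simp [cpt, Finset.sum_const, Finset.card_univ]
  field_simp

lemma sum_eq_one {d : ℕ} (hd : 2 ≤ d) {u : V d} (hu : u ∈ Hs d) : ∑ i, u i = 1 := by
  have hd0 : (d:ℝ) ≠ 0 := by
    have : (2:ℝ) ≤ (d:ℝ) := by exact_mod_cast hd
    linarith
  have := hu
  rw [Hs, Set.mem_setOf_eq, ip_eq_sum] at this
  simp only [cpt] at this
  rw [← Finset.sum_mul] at this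
  have h2 : (1/(d^2:ℝ)) ≠ 0 := by positivity
  field_simp at this
  linarith [this]

lemma centered {d : ℕ} (hd : 2 ≤ d) {u v : V d} (hu : u ∈ Hs d) (hv : v ∈ Hs d) :
    ip u v = inner ℝ (u - cpt d) (v - cpt d) + 1/(d^2:ℝ) := by
  have h1 : (inner ℝ (u - cpt d) (v - cpt d) : ℝ)
      = ip u v - ip u (cpt d) - ip (cpt d) v + ip (cpt d) (cpt d) := by
    simp only [ip, inner_sub_left, inner_sub_right]
    ring
  rw [h1, hu, ip_comm (cpt d) v, hv, ip_cc d hd]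
  ring


lemma ip_basisDist {d : ℕ} (hd : 2 ≤ d) {u : V d} (hu : u ∈ Hs d) (k : Fin (d^2)) :
    ip u (basisDist d k) = (u k + 1/(d:ℝ)) / ((d:ℝ)+1) := by
  have hd0 : (0:ℝ) < (d:ℝ) := by
    have : (2:ℝ) ≤ (d:ℝ) := by exact_mod_cast hd
    linarith
  rw [ip_eq_sum]
  have : ∀ i, u i * basisDist d k i
      = (if k = i then u i else 0) / ((d:ℝ)+1) + u i * (1/((d:ℝ)*((d:ℝ)+1))) := by
    intro i
    simp only [basisDist]
    by_cases h : k = i <;> simp [h] <;> [skip; left] <;> field_simp <;> ring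
  rw [Finset.sum_congr rfl (fun i _ => this i)]
  rw [Finset.sum_add_distrib, ← Finset.sum_mul, sum_eq_one hd hu]
  rw [← Finset.sum_div, Finset.sum_ite_eq]
  simp
  field_simp


section main
variable {d : ℕ}

lemma dpos (hd : 2 ≤ d) : (0:ℝ) < (d:ℝ) := by
  have : (2:ℝ) ≤ (d:ℝ) := by exact_mod_cast hd
  linarith

lemma d2le (hd : 2 ≤ d) : (2:ℝ) ≤ (d:ℝ) := by exact_mod_cast hd

lemma cpt_mem_Hs (hd : 2 ≤ d) : cpt d ∈ Hs d := ip_cc d hd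

lemma cpt_mem_inBall (hd : 2 ≤ d) : cpt d ∈ inBall d := by
  refine ⟨cpt_mem_Hs hd, ?_⟩
  have h2 := d2le hd
  have h0 : ‖cpt d - cpt d‖^2 = 0 := by simp
  rw [h0]
  have : (0:ℝ) < (d:ℝ)^2*((d:ℝ)^2-1) := by nlinarith [sq_nonneg ((d:ℝ)-2), sq_nonneg ((d:ℝ)+1)]
  positivity

lemma basisDist_mem_Hs (hd : 2 ≤ d) (k : Fin (d^2)) : basisDist d k ∈ Hs d := by
  have h2 := d2le hd
  have hd0 : (0:ℝ) < (d:ℝ) := by linarith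
  rw [Hs, Set.mem_setOf_eq, ip_comm, ip_basisDist hd (cpt_mem_Hs hd)]
  simp only [cpt]
  field_simp
  ring

-- closedness
lemma isClosed_Hs : IsClosed (Hs d) := by
  have : Hs d = (fun u : V d => (inner ℝ u (cpt d) : ℝ)) ⁻¹' {1/(d^2:ℝ)} := rfl
  rw [this]
  exact IsClosed.preimage (Continuous.inner continuous_id continuous_const) isClosed_singleton

lemma isClosed_polar (A : Set (V d)) : IsClosed (polar d A) := by
  have : polar d A = Hs d ∩ ⋂ v ∈ A, {u : V d | 1/((d:ℝ)*((d:ℝ)+1)) ≤ ip u v} := by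
    ext u
    simp only [polar, Set.mem_setOf_eq, Set.mem_inter_iff, Set.mem_iInter]
  rw [this]
  refine IsClosed.inter isClosed_Hs (isClosed_biInter fun v _ => ?_)
  exact isClosed_le continuous_const (Continuous.inner continuous_id continuous_const)

lemma isClosed_midBall : IsClosed (midBall d) := by
  have : midBall d = Hs d ∩ {u : V d | ‖u - cpt d‖^2 ≤ 1/((d:ℝ)^2*((d:ℝ)+1))} := rfl
  rw [this]
  refine IsClosed.inter isClosed_Hs ?_
  exact isClosed_le (Continuous.pow (Continuous.norm (continuous_id.sub continuous_const)) 2) continuous_const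

end main

section main2
variable {d : ℕ}

lemma const_low (hd : 2 ≤ d) :
    1/((d:ℝ)*((d:ℝ)+1)) = 1/(d:ℝ)^2 - 1/((d:ℝ)^2*((d:ℝ)+1)) := by
  have h2 := d2le hd
  have h0 : (d:ℝ) ≠ 0 := by linarith
  have h1 : (d:ℝ)+1 ≠ 0 := by linarith
  field_simp
  ring

lemma const_up (hd : 2 ≤ d) :
    2/((d:ℝ)*((d:ℝ)+1)) = 1/(d:ℝ)^2 + ((d:ℝ)-1)/((d:ℝ)^2*((d:ℝ)+1)) := by
  have h2 := d2le hd
  have h0 : (d:ℝ) ≠ 0 := by linarith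
  have h1 : (d:ℝ)+1 ≠ 0 := by linarith
  field_simp
  ring

lemma pair_of_centered (hd : 2 ≤ d) {p s : V d} (hp : p ∈ Hs d) (hs : s ∈ Hs d)
    (hl : -(1/((d:ℝ)^2*((d:ℝ)+1))) ≤ (inner ℝ (p - cpt d) (s - cpt d) : ℝ))
    (hu : (inner ℝ (p - cpt d) (s - cpt d) : ℝ) ≤ ((d:ℝ)-1)/((d:ℝ)^2*((d:ℝ)+1))) :
    1/((d:ℝ)*((d:ℝ)+1)) ≤ ip p s ∧ ip p s ≤ 2/((d:ℝ)*((d:ℝ)+1)) := by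
  rw [centered hd hp hs, const_low hd, const_up hd]
  constructor <;> linarith

lemma centered_low_of_pair (hd : 2 ≤ d) {p s : V d} (hp : p ∈ Hs d) (hs : s ∈ Hs d)
    (h : 1/((d:ℝ)*((d:ℝ)+1)) ≤ ip p s) :
    -(1/((d:ℝ)^2*((d:ℝ)+1))) ≤ (inner ℝ (p - cpt d) (s - cpt d) : ℝ) := by
  rw [centered hd hp hs, const_low hd] at h
  linarith

lemma centered_up_of_pair (hd : 2 ≤ d) {p s : V d} (hp : p ∈ Hs d) (hs : s ∈ Hs d)
    (h : ip p s ≤ 2/((d:ℝ)*((d:ℝ)+1))) :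
    (inner ℝ (p - cpt d) (s - cpt d) : ℝ) ≤ ((d:ℝ)-1)/((d:ℝ)^2*((d:ℝ)+1)) := by
  rw [centered hd hp hs, const_up hd] at h
  linarith

lemma norm_sq_le_of_pair (hd : 2 ≤ d) {p : V d} (hp : p ∈ Hs d)
    (h : ip p p ≤ 2/((d:ℝ)*((d:ℝ)+1))) :
    ‖p - cpt d‖^2 ≤ ((d:ℝ)-1)/((d:ℝ)^2*((d:ℝ)+1)) := by
  have := centered_up_of_pair hd hp hp h
  rwa [real_inner_self_eq_norm_sq] at this

end main2

section main3
variable {d : ℕ} {G : Set (V d)}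

lemma inBall_sub_G (hstem : cc d (basisSimplex d ∪ inBall d) ⊆ G) : inBall d ⊆ G :=
  fun _ hu => hstem (subset_closure (subset_convexHull ℝ _ (Or.inr hu)))

lemma basisDist_mem_G (hstem : cc d (basisSimplex d ∪ inBall d) ⊆ G) (k : Fin (d^2)) :
    basisDist d k ∈ G :=
  hstem (subset_closure (subset_convexHull ℝ _ (Or.inl (subset_convexHull ℝ _ ⟨k, rfl⟩))))

lemma cpt_mem_G (hd : 2 ≤ d) (hstem : cc d (basisSimplex d ∪ inBall d) ⊆ G) : cpt d ∈ G :=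
  inBall_sub_G hstem (cpt_mem_inBall hd)

lemma rm2_le_ro2 (hd : 2 ≤ d) :
    1/((d:ℝ)^2*((d:ℝ)+1)) ≤ ((d:ℝ)-1)/((d:ℝ)^2*((d:ℝ)+1)) := by
  have h2 := d2le hd
  rw [div_le_div_iff_of_pos_right (by positivity)]
  linarith

lemma polar_sub_simplex (hd : 2 ≤ d) (hstem : cc d (basisSimplex d ∪ inBall d) ⊆ G) :
    polar d G ⊆ probSimplex d := by
  intro u hu
  refine ⟨hu.1, fun k => ?_⟩
  have he := hu.2 _ (basisDist_mem_G hstem k)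
  rw [ip_basisDist hd hu.1 k] at he
  have hd0 := dpos hd
  rw [div_le_div_iff₀ (by positivity) (by linarith)] at he
  have h' : (u k + 1/(d:ℝ)) * ((d:ℝ)*((d:ℝ)+1)) = u k * ((d:ℝ)*((d:ℝ)+1)) + ((d:ℝ)+1) := by
    field_simp
  rw [h'] at he
  by_contra hneg
  push_neg at hneg
  have := mul_neg_of_neg_of_pos hneg (by nlinarith : (0:ℝ) < (d:ℝ)*((d:ℝ)+1))
  linarith

lemma part1 (hd : 2 ≤ d) (hG : IsGerm d G)
    (hstem : cc d (basisSimplex d ∪ inBall d) ⊆ G) :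
    IsGerm d (G ∪ (polar d G ∩ midBall d)) := by
  have h2 := d2le hd
  have hro : (0:ℝ) < ((d:ℝ)-1)/((d:ℝ)^2*((d:ℝ)+1)) := by
    apply div_pos <;> nlinarith
  have hrm : (0:ℝ) < 1/((d:ℝ)^2*((d:ℝ)+1)) := by positivity
  have hmo := rm2_le_ro2 hd
  have hGnorm : ∀ p ∈ G, ‖p - cpt d‖^2 ≤ ((d:ℝ)-1)/((d:ℝ)^2*((d:ℝ)+1)) :=
    fun p hp => norm_sq_le_of_pair hd (hG.1 hp).1 (hG.2 p hp p hp).2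
  constructor
  · rintro u (hu | hu)
    · exact hG.1 hu
    · exact polar_sub_simplex hd hstem hu.1
  · have key : ∀ p ∈ polar d G ∩ midBall d, ∀ s ∈ G,
        1/((d:ℝ)*((d:ℝ)+1)) ≤ ip p s ∧ ip p s ≤ 2/((d:ℝ)*((d:ℝ)+1)) := by
      intro p hp s hs
      have hpH : p ∈ Hs d := hp.1.1
      have hsH : s ∈ Hs d := (hG.1 hs).1
      refine ⟨hp.1.2 s hs, ?_⟩
      have hcs := real_inner_le_norm (p - cpt d) (s - cpt d)
      have hp2 : ‖p - cpt d‖^2 ≤ 1/((d:ℝ)^2*((d:ℝ)+1)) := hp.2.2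
      have hs2 := hGnorm s hs
      have h1 : (0:ℝ) ≤ ‖p - cpt d‖ := norm_nonneg _
      have h2' : (0:ℝ) ≤ ‖s - cpt d‖ := norm_nonneg _
      have h3 : (‖p - cpt d‖ * ‖s - cpt d‖)^2
          ≤ (((d:ℝ)-1)/((d:ℝ)^2*((d:ℝ)+1)))^2 := by
        have := mul_le_mul hp2 hs2 (sq_nonneg _) (le_of_lt hrm)
        calc (‖p - cpt d‖ * ‖s - cpt d‖)^2 = ‖p - cpt d‖^2 * ‖s - cpt d‖^2 := by ring
        _ ≤ (1/((d:ℝ)^2*((d:ℝ)+1))) * (((d:ℝ)-1)/((d:ℝ)^2*((d:ℝ)+1))) := this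
        _ ≤ _ := by nlinarith
      have hab : ‖p - cpt d‖ * ‖s - cpt d‖ ≤ ((d:ℝ)-1)/((d:ℝ)^2*((d:ℝ)+1)) := by
        nlinarith [mul_nonneg h1 h2']
      rw [centered hd hpH hsH, const_up hd]
      linarith
    rintro p (hp | hp) s (hs | hs)
    · exact hG.2 p hp s hs
    · have := key s hs p hp
      rw [ip_comm s p] at this
      exact this
    · exact key p hp s hs
    · have hpH : p ∈ Hs d := hp.1.1
      have hsH : s ∈ Hs d := hs.1.1
      have hp2 : ‖p - cpt d‖^2 ≤ 1/((d:ℝ)^2*((d:ℝ)+1)) := hp.2.2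
      have hs2 : ‖s - cpt d‖^2 ≤ 1/((d:ℝ)^2*((d:ℝ)+1)) := hs.2.2
      have hcs := abs_real_inner_le_norm (p - cpt d) (s - cpt d)
      have h1 : (0:ℝ) ≤ ‖p - cpt d‖ := norm_nonneg _
      have h2' : (0:ℝ) ≤ ‖s - cpt d‖ := norm_nonneg _
      have h3 : (‖p - cpt d‖ * ‖s - cpt d‖)^2 ≤ (1/((d:ℝ)^2*((d:ℝ)+1)))^2 := by
        have := mul_le_mul hp2 hs2 (sq_nonneg _) (le_of_lt hrm)
        calc (‖p - cpt d‖ * ‖s - cpt d‖)^2 = ‖p - cpt d‖^2 * ‖s - cpt d‖^2 := by ring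
        _ ≤ _ := this
        _ = _ := by ring
      have hab : ‖p - cpt d‖ * ‖s - cpt d‖ ≤ 1/((d:ℝ)^2*((d:ℝ)+1)) := by
        nlinarith [mul_nonneg h1 h2']
      have habs : |(inner ℝ (p - cpt d) (s - cpt d) : ℝ)| ≤ 1/((d:ℝ)^2*((d:ℝ)+1)) :=
        le_trans hcs hab
      rw [abs_le] at habs
      exact pair_of_centered hd hpH hsH habs.1 (le_trans habs.2 hmo)

end main3

section main4
variable {d : ℕ} {G : Set (V d)}

set_option maxHeartbeats 1000000 in
lemma part3 (hd : 2 ≤ d) (hG : IsGerm d G) (hclosed : IsClosed G)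
    (hstem : cc d (basisSimplex d ∪ inBall d) ⊆ G) (C' : Set (V d)) (hC' : IsGerm d C')
    (hsub : G ∪ (polar d G ∩ midBall d) ⊆ C') :
    C' ∩ outSphere d = G ∩ outSphere d := by
  have h2 := d2le hd
  apply Set.Subset.antisymm
  · rintro u ⟨huC, huS⟩
    refine ⟨?_, huS⟩
    by_contra hnotG
    have huH : u ∈ Hs d := huS.1
    have hxnorm : ‖u - cpt d‖^2 = ((d:ℝ)-1)/((d:ℝ)^2*((d:ℝ)+1)) := by
      have h := huS.2
      rw [centered hd huH huH, const_up hd, real_inner_self_eq_norm_sq] at h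
      linarith
    rcases eq_or_lt_of_le hd with hd2 | hd3
    · -- d = 2 : the out-sphere is inside the in-ball
      refine hnotG (inBall_sub_G hstem ⟨huH, ?_⟩)
      rw [hxnorm, ← hd2]
      norm_num
    · -- d ≥ 3
      have hd3' : (3:ℝ) ≤ (d:ℝ) := by exact_mod_cast hd3
      set ro2 := ((d:ℝ)-1)/((d:ℝ)^2*((d:ℝ)+1)) with hro2
      set rm2 := 1/((d:ℝ)^2*((d:ℝ)+1)) with hrm2
      have hrmpos : (0:ℝ) < rm2 := by rw [hrm2]; positivity
      have hmlt : rm2 < ro2 := by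
        rw [hrm2, hro2, div_lt_div_iff_of_pos_right (by positivity)]
        linarith
      have hropos : (0:ℝ) < ro2 := lt_trans hrmpos hmlt
      have hGnorm : ∀ p ∈ G, ‖p - cpt d‖^2 ≤ ro2 :=
        fun p hp => norm_sq_le_of_pair hd (hG.1 hp).1 (hG.2 p hp p hp).2
      -- G is compact
      have hGbd : G ⊆ Metric.closedBall (0 : V d) 1 := by
        intro p hp
        obtain ⟨hpH, hpnn⟩ := hG.1 hp
        have hsum := sum_eq_one hd hpH
        have hle : ∀ i, p i ≤ 1 := by
          intro i
          calc p i ≤ ∑ j, p j := Finset.single_le_sum (fun j _ => hpnn j) (Finset.mem_univ i)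
          _ = 1 := hsum
        have hn2 : ‖p‖^2 ≤ 1 := by
          rw [← real_inner_self_eq_norm_sq]
          have : (inner ℝ p p : ℝ) = ∑ i, p i * p i := ip_eq_sum p p
          rw [this]
          calc ∑ i, p i * p i ≤ ∑ i, p i := by
                apply Finset.sum_le_sum
                intro i _
                nlinarith [hpnn i, hle i]
          _ = 1 := hsum
        simp only [Metric.mem_closedBall, dist_zero_right]
        nlinarith [norm_nonneg p]
      have hK : IsCompact G :=
        Metric.isCompact_of_isClosed_isBounded hclosed
          (Metric.isBounded_closedBall.subset hGbd)
      -- maximize ⟪u - c, v - c⟫ over v ∈ G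
      obtain ⟨v₀, hv₀G, hmax⟩ := hK.exists_isMaxOn ⟨cpt d, cpt_mem_G hd hstem⟩
        ((continuous_const.inner (continuous_id.sub continuous_const)).continuousOn
          (f := fun v : V d => (inner ℝ (u - cpt d) (v - cpt d) : ℝ)))
      set M := (inner ℝ (u - cpt d) (v₀ - cpt d) : ℝ) with hM
      have hmax' : ∀ v ∈ G, (inner ℝ (u - cpt d) (v - cpt d) : ℝ) ≤ M :=
        fun v hv => hmax hv
      have hMlt : M < ro2 := by
        have hne : u - v₀ ≠ 0 := sub_ne_zero.mpr (fun h => hnotG (h ▸ hv₀G))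
        have hpos : 0 < ‖(u - cpt d) - (v₀ - cpt d)‖^2 := by
          rw [sub_sub_sub_cancel_right]
          have := norm_pos_iff.mpr hne
          positivity
        have hexp := norm_sub_sq_real (u - cpt d) (v₀ - cpt d)
        have hy := hGnorm v₀ hv₀G
        rw [hexp] at hpos
        rw [hM]
        nlinarith [hxnorm]
      set N := max M ((rm2+ro2)/2) with hN
      have hN1 : (0:ℝ) < N := lt_of_lt_of_le (by linarith) (le_max_right _ _)
      have hN2 : N < ro2 := max_lt hMlt (by linarith)
      have hN3 : rm2*ro2 ≤ N^2 := by
        have := le_max_right M ((rm2+ro2)/2)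
        nlinarith [sq_nonneg (ro2 - rm2)]
      set s := rm2/N with hs
      have hspos : (0:ℝ) < s := by positivity
      set w : V d := cpt d - s • (u - cpt d) with hw
      have hwc : w - cpt d = -(s • (u - cpt d)) := by
        rw [hw]; abel
      have hxc : (inner ℝ (u - cpt d) (cpt d) : ℝ) = 0 := by
        have h1 : (inner ℝ (u - cpt d) (cpt d) : ℝ) = ip u (cpt d) - ip (cpt d) (cpt d) := by
          simp [ip, inner_sub_left]
        rw [h1, huH, ip_cc d hd]
        ring
      have hwH : w ∈ Hs d := by
        show ip w (cpt d) = _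
        rw [ip, hw, inner_sub_left, real_inner_smul_left, hxc]
        have : (inner ℝ (cpt d) (cpt d) : ℝ) = 1/(d^2:ℝ) := ip_cc d hd
        rw [this]
        ring
      have hwip : ∀ y : V d, (inner ℝ (w - cpt d) y : ℝ) = -(s * (inner ℝ (u - cpt d) y : ℝ)) := by
        intro y
        rw [hwc, inner_neg_left, real_inner_smul_left]
      have hwm : w ∈ midBall d := by
        refine ⟨hwH, ?_⟩
        have hnw : ‖w - cpt d‖^2 = s^2 * ro2 := by
          rw [hwc, norm_neg, norm_smul, mul_pow, ← hxnorm]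
          simp [abs_of_pos hspos]
        rw [hnw, ← hrm2, hs, div_pow, div_mul_eq_mul_div, div_le_iff₀ (by positivity)]
        nlinarith
      have hwpolar : w ∈ polar d G := by
        refine ⟨hwH, fun v hv => ?_⟩
        rw [centered hd hwH (hG.1 hv).1, const_low hd, hwip]
        have h5 := hmax' v hv
        have h6 : s * (inner ℝ (u - cpt d) (v - cpt d) : ℝ) ≤ s * M :=
          mul_le_mul_of_nonneg_left h5 (le_of_lt hspos)
        have h7 : s * M ≤ s * N := mul_le_mul_of_nonneg_left (le_max_left _ _) (le_of_lt hspos)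
        have h8 : s * N = rm2 := by
          rw [hs]
          field_simp
        rw [← hrm2]
        linarith
      have hwC' : w ∈ C' := hsub (Or.inr ⟨hwpolar, hwm⟩)
      -- contradiction from the germ inequality between u and w
      have hcontra := (hC'.2 u huC w hwC').1
      rw [centered hd huH hwH, const_low hd] at hcontra
      have h9 : (inner ℝ (u - cpt d) (w - cpt d) : ℝ) = -(s * ro2) := by
        rw [real_inner_comm, hwip, real_inner_self_eq_norm_sq, hxnorm]
      rw [h9, ← hrm2] at hcontra
      have h10 : rm2 * ro2 > rm2 * N := by nlinarith
      have h11 : s * ro2 > rm2 := by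
        rw [hs, div_mul_eq_mul_div, gt_iff_lt, lt_div_iff₀ hN1]
        linarith
      linarith
  · rintro u ⟨h1, h2⟩
    exact ⟨hsub (Or.inl h1), h2⟩

end main4


/-- for a closed germ G containing the principal stem,
C = G ∪ (G* ∩ B_m) is a closed germ, and any germ containing C meets the
out-sphere exactly where G does. -/
theorem statement9 (d : ℕ) (hd : 2 ≤ d) (G : Set (V d)) (hG : IsGerm d G)
    (hclosed : IsClosed G) (hstem : cc d (basisSimplex d ∪ inBall d) ⊆ G) :
    IsGerm d (G ∪ (polar d G ∩ midBall d)) ∧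
    IsClosed (G ∪ (polar d G ∩ midBall d)) ∧
    ∀ C' : Set (V d), IsGerm d C' → G ∪ (polar d G ∩ midBall d) ⊆ C' →
      C' ∩ outSphere d = G ∩ outSphere d := by
  exact ⟨part1 hd hG hstem,
    IsClosed.union hclosed (IsClosed.inter (isClosed_polar G) isClosed_midBall),
    fun C' hC' hsub => part3 hd hG hclosed hstem C' hC' hsub⟩
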